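/- Let X be an LDUI dual unitary matrix parametrized by (A,C) with |C_{ij}| = 1 for all i,j and A = diag(C). Then Tr[(CC†)²] ≥ d³ with equality iff C is a complex Hadamard matrix, and consequently the entangling power e_p(X) = E(XS)/E(S) satisfies e_p(X) ≤ d/(d+1), with equality if and only if C is a complex Hadamard matrix. -/

import Mathlib

open Matrix

/-- The LDOI matrix `X^{(3)}_{(A,B,C)} = Σ_{i,j} A_{ij}|ij⟩⟨ij| + Σ_{i≠j} B_{ij}|ii⟩⟨jj|
  + Σ_{i≠j} C_{ij}|ij⟩⟨ji|`. -/
def X3 {d : ℕ} {R : Type*} [CommRing R] (A B C : Matrix (Fin d) (Fin d) R) :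
    Matrix (Fin d × Fin d) (Fin d × Fin d) R :=
  Matrix.of fun p q =>
    (if p.1 = q.1 ∧ p.2 = q.2 then A p.1 p.2 else 0) +
    (if p.1 = p.2 ∧ q.1 = q.2 ∧ p.1 ≠ q.1 then B p.1 q.1 else 0) +
    (if p.1 = q.2 ∧ p.2 = q.1 ∧ p.1 ≠ p.2 then C p.1 p.2 else 0)

/-- The realignment `(X^R)_{ij,kl} = X_{ik,jl}`. -/
def realign {d : ℕ} {R : Type*} [CommRing R]
    (X : Matrix (Fin d × Fin d) (Fin d × Fin d) R) :
    Matrix (Fin d × Fin d) (Fin d × Fin d) R :=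
  Matrix.of fun p q => X (p.1, q.1) (p.2, q.2)

/-- The partial transpose `(X^Γ)_{ij,kl} = X_{il,kj}`. -/
def ptrans {d : ℕ} {R : Type*} [CommRing R]
    (X : Matrix (Fin d × Fin d) (Fin d × Fin d) R) :
    Matrix (Fin d × Fin d) (Fin d × Fin d) R :=
  Matrix.of fun p q => X (p.1, q.2) (q.1, p.2)

/-- The triple (A,B,C) has equal diagonals. -/
def EqDiag {d : ℕ} {R : Type*} [CommRing R] (A B C : Matrix (Fin d) (Fin d) R) : Prop :=
  ∀ i, A i i = B i i ∧ B i i = C i i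

/-- Auxiliary: embedding of a d×d matrix into the "diagonal" subspace. -/
def Dm {d : ℕ} (M : Matrix (Fin d) (Fin d) ℂ) :
    Matrix (Fin d × Fin d) (Fin d × Fin d) ℂ :=
  Matrix.of fun p q => if p.1 = p.2 ∧ q.1 = q.2 then M p.1 q.1 else 0

lemma Dm_mul {d : ℕ} (M N : Matrix (Fin d) (Fin d) ℂ) : Dm M * Dm N = Dm (M * N) := by
  ext ⟨i,j⟩ ⟨k,l⟩
  simp only [Dm, Matrix.mul_apply, Matrix.of_apply]
  rw [Fintype.sum_prod_type]
  by_cases hij : i = j <;> by_cases hkl : k = l <;>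
    simp [hij, hkl, Finset.sum_ite_eq, Matrix.mul_apply]

lemma Dm_conjT {d : ℕ} (M : Matrix (Fin d) (Fin d) ℂ) : (Dm M)ᴴ = Dm Mᴴ := by
  ext ⟨i,j⟩ ⟨k,l⟩
  simp only [Dm, Matrix.conjTranspose_apply, Matrix.of_apply]
  by_cases hij : i = j <;> by_cases hkl : k = l <;> simp [hij, hkl]

lemma trace_Dm {d : ℕ} (M : Matrix (Fin d) (Fin d) ℂ) : (Dm M).trace = M.trace := by
  simp only [Matrix.trace, Matrix.diag, Dm, Matrix.of_apply]
  rw [Fintype.sum_prod_type]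
  simp [Finset.sum_ite_eq]

lemma XG_eq_Dm {d : ℕ} (C : Matrix (Fin d) (Fin d) ℂ) :
    ptrans (X3 (Matrix.diagonal fun i => C i i) (Matrix.diagonal fun i => C i i) C) = Dm C := by
  ext ⟨i,j⟩ ⟨k,l⟩
  simp only [ptrans, X3, Dm, Matrix.of_apply, Matrix.diagonal_apply]
  by_cases hij : i = j
  · subst hij
    by_cases hkl : k = l
    · subst hkl
      by_cases hik : i = k
      · subst hik; simp
      · simp [hik, Ne.symm hik]
    · have h1 : ¬(i = k ∧ l = i) := by rintro ⟨rfl, rfl⟩; exact hkl rfl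
      have h2 : ¬(i = l ∧ k = i ∧ i ≠ k) := by rintro ⟨rfl, rfl, h⟩; exact h rfl
      simp [h1, h2, hkl]
      intro h _
      exact absurd h.symm hkl
  · have h1 : ¬(i = k ∧ l = j ∧ i = l) := by rintro ⟨rfl, rfl, rfl⟩; exact hij rfl
    have h3 : ¬(i = j ∧ l = k ∧ i ≠ l) := fun h => hij h.1
    simp only [hij, false_and, if_false, if_neg h3]
    have e1 : (if i = k ∧ l = j then if i = l then C i i else 0 else 0) = 0 := by
      split_ifs with ha hb
      · exact absurd ⟨ha.1, ha.2, hb⟩ h1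
      · rfl
      · rfl
    have e2 : (if i = l ∧ k = j ∧ i ≠ k then if i = k then C i i else 0 else 0) = 0 := by
      split_ifs with ha hb
      · exact absurd hb ha.2.2
      · rfl
      · rfl
    rw [e1, e2]; simp

/-- maximum entangling power of LDUI dual unitary matrices.
For a dual unitary LDUI matrix (parametrized by `C` with unimodular entries and
`A = diag(C)`), `Tr[(CC†)²] ≥ d³` with equality iff `C` is a complex Hadamard matrix,
and the entangling power `e_p(X) = E(XS)/E(S)` is at most `d/(d+1)`, with equality
iff `C` is a complex Hadamard matrix. -/
theorem stmt_18 {d : ℕ} (hd : 2 ≤ d) (C : Matrix (Fin d) (Fin d) ℂ)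
    (hC : ∀ i j, ‖C i j‖ = 1)
    (A : Matrix (Fin d) (Fin d) ℂ) (hA : A = Matrix.diagonal fun i => C i i)
    (XG : Matrix (Fin d × Fin d) (Fin d × Fin d) ℂ)
    (hXG : XG = ptrans (X3 A A C))
    (ep : ℝ)
    (hep : ep = (1 - (Matrix.trace ((XG * XGᴴ) * (XG * XGᴴ))).re / (d : ℝ) ^ 4) /
                (1 - 1 / (d : ℝ) ^ 2)) :
    (d : ℝ) ^ 3 ≤ (Matrix.trace ((C * Cᴴ) * (C * Cᴴ))).re ∧
    ((Matrix.trace ((C * Cᴴ) * (C * Cᴴ))).re = (d : ℝ) ^ 3 ↔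
      C * Cᴴ = (d : ℂ) • (1 : Matrix (Fin d) (Fin d) ℂ)) ∧
    ep ≤ (d : ℝ) / (d + 1) ∧
    (ep = (d : ℝ) / (d + 1) ↔
      C * Cᴴ = (d : ℂ) • (1 : Matrix (Fin d) (Fin d) ℂ)) := by
  have hXD : XG = Dm C := by rw [hXG, hA]; exact XG_eq_Dm C
  set M : Matrix (Fin d) (Fin d) ℂ := C * Cᴴ with hM
  -- trace of (XG XGᴴ)² equals trace of M²
  have htrX : Matrix.trace ((XG * XGᴴ) * (XG * XGᴴ)) = Matrix.trace (M * M) := by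
    rw [hXD, Dm_conjT, Dm_mul, Dm_mul, trace_Dm]
  -- M is Hermitian
  have hMherm : ∀ i k, M k i = (starRingEnd ℂ) (M i k) := by
    intro i k
    have : Mᴴ = M := by rw [hM, Matrix.conjTranspose_mul, Matrix.conjTranspose_conjTranspose]
    conv_lhs => rw [← this]
    simp [Matrix.conjTranspose_apply]
  -- diagonal entries of M equal d
  have hdiag : ∀ i, M i i = (d : ℂ) := by
    intro i
    rw [hM, Matrix.mul_apply]
    have h1 : ∀ k : Fin d, C i k * (starRingEnd ℂ) (C i k) = 1 := by
      intro k
      rw [Complex.mul_conj]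
      norm_cast
      rw [Complex.normSq_eq_norm_sq, hC i k]; norm_num
    simp [Matrix.conjTranspose_apply, h1]
  -- real part of trace of M² as sum of normSq
  have hre : (Matrix.trace (M * M)).re = ∑ i, ∑ k, Complex.normSq (M i k) := by
    have h1 : Matrix.trace (M * M) = ∑ i, ∑ k, (Complex.normSq (M i k) : ℂ) := by
      simp only [Matrix.trace, Matrix.diag, Matrix.mul_apply]
      refine Finset.sum_congr rfl fun i _ => Finset.sum_congr rfl fun k _ => ?_
      rw [hMherm i k, Complex.mul_conj]
    rw [h1]
    rw [show (∑ i, ∑ k, (Complex.normSq (M i k) : ℂ)) =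
        ((∑ i, ∑ k, Complex.normSq (M i k) : ℝ) : ℂ) by push_cast; ring]
    exact Complex.ofReal_re _
  set T : ℝ := ∑ i, ∑ k, Complex.normSq (M i k) with hT
  -- split T into diagonal and off-diagonal
  have hsplit : T = (d : ℝ) ^ 3 + ∑ i, ∑ k ∈ Finset.univ.erase i, Complex.normSq (M i k) := by
    have h1 : ∀ i : Fin d, ∑ k, Complex.normSq (M i k) =
        Complex.normSq (M i i) + ∑ k ∈ Finset.univ.erase i, Complex.normSq (M i k) :=
      fun i => (Finset.add_sum_erase _ _ (Finset.mem_univ i)).symm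
    rw [hT]
    rw [Finset.sum_congr rfl fun i _ => h1 i, Finset.sum_add_distrib]
    congr 1
    have h2 : ∀ i : Fin d, Complex.normSq (M i i) = (d : ℝ) ^ 2 := by
      intro i; rw [hdiag i]
      simp [Complex.normSq_apply]; ring
    rw [Finset.sum_congr rfl fun i _ => h2 i]
    simp [Finset.sum_const]
    ring
  have hRnn : 0 ≤ ∑ i, ∑ k ∈ Finset.univ.erase i, Complex.normSq (M i k) :=
    Finset.sum_nonneg fun i _ => Finset.sum_nonneg fun k _ => Complex.normSq_nonneg _
  have hTge : (d : ℝ) ^ 3 ≤ T := by rw [hsplit]; linarith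
  -- the first iff
  have hiff : T = (d : ℝ) ^ 3 ↔ M = (d : ℂ) • (1 : Matrix (Fin d) (Fin d) ℂ) := by
    constructor
    · intro h
      have hR0 : ∑ i, ∑ k ∈ Finset.univ.erase i, Complex.normSq (M i k) = 0 := by
        rw [hsplit] at h; linarith
      have hall := (Finset.sum_eq_zero_iff_of_nonneg
        (fun i _ => Finset.sum_nonneg fun k _ => Complex.normSq_nonneg _)).mp hR0
      ext i k
      by_cases hik : i = k
      · subst hik
        simp [hdiag i, Matrix.one_apply]
      · have h2 := (Finset.sum_eq_zero_iff_of_nonneg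
          (fun k _ => Complex.normSq_nonneg _)).mp (hall i (Finset.mem_univ i)) k
          (Finset.mem_erase.mpr ⟨Ne.symm hik, Finset.mem_univ k⟩)
        have h3 : M i k = 0 := Complex.normSq_eq_zero.mp h2
        simp [h3, Matrix.one_apply, hik]
    · intro h
      rw [hT]
      have h2 : ∀ i k, Complex.normSq (M i k) = if i = k then (d : ℝ) ^ 2 else 0 := by
        intro i k
        rw [h]
        by_cases hik : i = k
        · subst hik; simp [Matrix.one_apply, Complex.normSq_apply]; ring
        · simp [Matrix.one_apply, hik]
      simp only [h2]
      simp [Finset.sum_ite_eq]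
      ring
  -- real arithmetic
  have hx2 : (2 : ℝ) ≤ (d : ℝ) := by exact_mod_cast hd
  have hx0 : (0 : ℝ) < d := by linarith
  have hden : (0 : ℝ) < 1 - 1 / (d : ℝ) ^ 2 := by
    rw [sub_pos, div_lt_one (by positivity)]
    nlinarith
  have hepT : ep = (1 - T / (d : ℝ) ^ 4) / (1 - 1 / (d : ℝ) ^ 2) := by
    rw [hep, htrX, hre]
  have haux : (d : ℝ) / (d + 1) = (1 - 1 / (d : ℝ)) / (1 - 1 / (d : ℝ) ^ 2) := by
    rw [div_eq_div_iff (by linarith) hden.ne']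
    field_simp
    ring
  have hgoal1 : (d : ℝ) ^ 3 ≤ (Matrix.trace (M * M)).re := by rw [hre]; exact hTge
  have hgoal2 : (Matrix.trace (M * M)).re = (d : ℝ) ^ 3 ↔
      M = (d : ℂ) • (1 : Matrix (Fin d) (Fin d) ℂ) := by rw [hre]; exact hiff
  refine ⟨hgoal1, hgoal2, ?_, ?_⟩
  · rw [hepT, haux]
    have h5 : 1 / (d : ℝ) ≤ T / (d : ℝ) ^ 4 := by
      rw [div_le_div_iff₀ hx0 (by positivity)]
      nlinarith
    have hnum : 1 - T / (d : ℝ) ^ 4 ≤ 1 - 1 / (d : ℝ) := by linarith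
    rw [div_le_div_iff₀ hden hden]
    exact mul_le_mul_of_nonneg_right hnum hden.le
  · rw [hepT, haux]
    constructor
    · intro h
      rw [div_eq_div_iff hden.ne' hden.ne'] at h
      have h2 := mul_right_cancel₀ hden.ne' h
      have h3 : T / (d : ℝ) ^ 4 = 1 / (d : ℝ) := by linarith
      rw [div_eq_div_iff (by positivity) hx0.ne'] at h3
      have h4 : T = (d : ℝ) ^ 3 := by
        have := mul_right_cancel₀ hx0.ne' (by linarith [h3] : T * (d:ℝ) = (d:ℝ)^3 * (d:ℝ))
        exact this
      exact hiff.mp h4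
    · intro h
      have h4 : T = (d : ℝ) ^ 3 := hiff.mpr h
      have h5 : (d : ℝ) ^ 3 / (d : ℝ) ^ 4 = 1 / (d : ℝ) := by
        rw [div_eq_div_iff (by positivity) hx0.ne']
        ring
      rw [h4, h5]
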